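/- Let {φ_r}_{0<r<1} be an approximation of identity on 𝕋 with φ_r ≥ 0, and let λ(r) ↘ 0 satisfy limsup_{r→1} λ(r)·‖φ_r‖_∞ = ∞. Then there exists a nonnegative function f ∈ L^1(𝕋) such that for every x ∈ 𝕋, limsup_{r→1} sup_{|θ-x|≤λ(r)} ∫_𝕋 φ_r(θ-t) f(t) dt = ∞. -/

import Mathlib

open MeasureTheory Real Set Filter Topology
open scoped ENNReal NNReal

/-- The `L^∞` norm of a kernel on the circle `𝕋 = [-π, π)`. -/
noncomputable def supNorm05 (φ : ℝ → ℝ) : ℝ :=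
  (eLpNorm φ ⊤ (volume.restrict (Set.Ioc (-π) π))).toReal

/-- The symmetric decreasing majorant `φ*(x) = sup_{|x| ≤ |t| ≤ π} |φ(t)|`. -/
noncomputable def symMaj05 (φ : ℝ → ℝ) (x : ℝ) : ℝ :=
  sSup {s : ℝ | ∃ t, |x| ≤ |t| ∧ |t| ≤ π ∧ s = |φ t|}

namespace Sharp5

set_option maxHeartbeats 1000000


lemma symMaj_bdd (φ : ℝ → ℝ) {M : ℝ} (hM : ∀ t, |φ t| ≤ M) (x : ℝ) :
    BddAbove {s : ℝ | ∃ t, |x| ≤ |t| ∧ |t| ≤ π ∧ s = |φ t|} := by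
  refine ⟨M, ?_⟩
  rintro s ⟨t, -, -, rfl⟩
  exact hM t

lemma le_symMaj (φ : ℝ → ℝ) {M : ℝ} (hM : ∀ t, |φ t| ≤ M) {x t : ℝ}
    (h1 : |x| ≤ |t|) (h2 : |t| ≤ π) : |φ t| ≤ symMaj05 φ x :=
  le_csSup (symMaj_bdd φ hM x) ⟨t, h1, h2, rfl⟩

lemma symMaj_nonneg (φ : ℝ → ℝ) {M : ℝ} (hM : ∀ t, |φ t| ≤ M) {x : ℝ}
    (hx : |x| ≤ π) : 0 ≤ symMaj05 φ x :=
  (abs_nonneg _).trans (le_symMaj φ hM le_rfl hx)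

lemma symMaj_mono (φ : ℝ → ℝ) {M : ℝ} (hM : ∀ t, |φ t| ≤ M) :
    MonotoneOn (symMaj05 φ) (Icc (-π) 0) := by
  intro x hx y hy hxy
  have hπ : (0:ℝ) ≤ π := pi_pos.le
  have hx1 : |x| ≤ π := abs_le.2 ⟨hx.1, hx.2.trans hπ⟩
  refine csSup_le_csSup (symMaj_bdd φ hM y) ⟨|φ x|, x, le_rfl, hx1, rfl⟩ ?_
  rintro s ⟨t, h1, h2, rfl⟩
  have : |y| ≤ |x| := by
    rw [abs_of_nonpos hx.2, abs_of_nonpos hy.2]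
    linarith
  exact ⟨t, this.trans h1, h2, rfl⟩

lemma symMaj_anti (φ : ℝ → ℝ) {M : ℝ} (hM : ∀ t, |φ t| ≤ M) :
    AntitoneOn (symMaj05 φ) (Icc 0 π) := by
  intro x hx y hy hxy
  have hy1 : |y| ≤ π := abs_le.2 ⟨by linarith [hy.1, pi_pos.le], hy.2⟩
  refine csSup_le_csSup (symMaj_bdd φ hM x) ⟨|φ y|, y, le_rfl, hy1, rfl⟩ ?_
  rintro s ⟨t, h1, h2, rfl⟩
  have : |x| ≤ |y| := by rw [abs_of_nonneg hx.1, abs_of_nonneg hy.1]; exact hxy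
  exact ⟨t, this.trans h1, h2, rfl⟩

/-- Localization: if `φ t ≥ h > 0` at some `|t| ≤ π`, then the integral of the
symmetric majorant is at least `2|t|h`. -/
lemma localize (φ : ℝ → ℝ) {M : ℝ} (hM : ∀ t, |φ t| ≤ M) {h t : ℝ}
    (h0 : 0 < h) (ht : |t| ≤ π) (hφ : h ≤ φ t) :
    2 * |t| * h ≤ ∫ x in (-π)..π, symMaj05 φ x := by
  set u := |t| with hu
  have hu0 : 0 ≤ u := abs_nonneg t
  have huπ : u ≤ π := ht
  have hπ : (0:ℝ) < π := pi_pos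
  have key : ∀ x ∈ Icc (-u) u, h ≤ symMaj05 φ x := by
    intro x hx
    have hxu : |x| ≤ |t| := by rw [← hu] at *; exact abs_le.2 ⟨hx.1, hx.2⟩
    calc h ≤ φ t := hφ
    _ ≤ |φ t| := le_abs_self _
    _ ≤ symMaj05 φ x := le_symMaj φ hM hxu ht
  have I1 : IntervalIntegrable (symMaj05 φ) volume (-π) (-u) := by
    apply MonotoneOn.intervalIntegrable
    apply (symMaj_mono φ hM).mono
    rw [uIcc_of_le (by linarith)]
    exact Icc_subset_Icc le_rfl (by linarith)
  have I2 : IntervalIntegrable (symMaj05 φ) volume (-u) 0 := by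
    apply MonotoneOn.intervalIntegrable
    apply (symMaj_mono φ hM).mono
    rw [uIcc_of_le (by linarith)]
    exact Icc_subset_Icc (by linarith) le_rfl
  have I3 : IntervalIntegrable (symMaj05 φ) volume 0 u := by
    apply AntitoneOn.intervalIntegrable
    apply (symMaj_anti φ hM).mono
    rw [uIcc_of_le (by linarith)]
    exact Icc_subset_Icc le_rfl (by linarith)
  have I4 : IntervalIntegrable (symMaj05 φ) volume u π := by
    apply AntitoneOn.intervalIntegrable
    apply (symMaj_anti φ hM).mono
    rw [uIcc_of_le (by linarith)]
    exact Icc_subset_Icc (by linarith) le_rfl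
  have split : (∫ x in (-π)..π, symMaj05 φ x)
      = (∫ x in (-π)..(-u), symMaj05 φ x) + ((∫ x in (-u)..0, symMaj05 φ x)
        + ((∫ x in (0:ℝ)..u, symMaj05 φ x) + ∫ x in u..π, symMaj05 φ x)) := by
    rw [intervalIntegral.integral_add_adjacent_intervals I3 I4,
        intervalIntegral.integral_add_adjacent_intervals I2 (I3.trans I4),
        intervalIntegral.integral_add_adjacent_intervals I1 (I2.trans (I3.trans I4))]
  have B1 : (0:ℝ) ≤ ∫ x in (-π)..(-u), symMaj05 φ x := by
    apply intervalIntegral.integral_nonneg (by linarith)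
    intro x hx
    exact symMaj_nonneg φ hM (abs_le.2 ⟨hx.1, by linarith [hx.2]⟩)
  have B4 : (0:ℝ) ≤ ∫ x in u..π, symMaj05 φ x := by
    apply intervalIntegral.integral_nonneg (by linarith)
    intro x hx
    exact symMaj_nonneg φ hM (abs_le.2 ⟨by linarith [hx.1], hx.2⟩)
  have B2 : u * h ≤ ∫ x in (-u)..0, symMaj05 φ x := by
    have h1 := intervalIntegral.integral_mono_on (by linarith : -u ≤ 0)
      (intervalIntegrable_const (c := h)) I2
      (fun x hx => key x ⟨hx.1, by linarith [hx.2]⟩)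
    have h2 : (∫ _x in (-u)..(0:ℝ), h) = u * h := by
      rw [intervalIntegral.integral_const, smul_eq_mul]; ring
    linarith
  have B3 : u * h ≤ ∫ x in (0:ℝ)..u, symMaj05 φ x := by
    have h1 := intervalIntegral.integral_mono_on (by linarith : (0:ℝ) ≤ u)
      (intervalIntegrable_const (c := h)) I3
      (fun x hx => key x ⟨by linarith [hx.1], hx.2⟩)
    have h2 : (∫ _x in (0:ℝ)..u, h) = u * h := by
      rw [intervalIntegral.integral_const, smul_eq_mul]; ring
    linarith
  rw [split]; nlinarith



/-- If `h < supNorm05 φ` then the set where `φ ≥ h` (within the period) has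
positive measure. -/
lemma exists_spike (φ : ℝ → ℝ) (hm : Measurable φ) (hnn : ∀ t, 0 ≤ φ t)
    {h : ℝ} (hh : 0 ≤ h) (hlt : h < supNorm05 φ) :
    0 < volume ({t | h ≤ φ t} ∩ Ioc (-π) π) := by
  by_contra hcon
  push_neg at hcon
  have h0 : volume ({t | h ≤ φ t} ∩ Ioc (-π) π) = 0 := le_antisymm hcon zero_le
  have hae : ∀ᵐ t ∂(volume.restrict (Ioc (-π) π)), ‖φ t‖ ≤ h := by
    rw [ae_iff]
    rw [Measure.restrict_apply₀']
    · refine measure_mono_null ?_ h0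
      intro t ht
      simp only [mem_inter_iff, mem_setOf_eq] at *
      refine ⟨?_, ht.2⟩
      have := ht.1
      rw [Real.norm_eq_abs, abs_of_nonneg (hnn t)] at this
      exact le_of_not_ge this
    · exact measurableSet_Ioc.nullMeasurableSet
  have hle : supNorm05 φ ≤ h := by
    have := eLpNormEssSup_le_of_ae_bound hae
    rw [supNorm05, eLpNorm_exponent_top]
    exact ENNReal.toReal_le_of_le_ofReal hh this
  linarith

/-- Existence of an interval where a positive-measure set has density ≥ 1/2. -/
lemma exists_density_pt {E : Set ℝ} (hE : MeasurableSet E) (hpos : 0 < volume E)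
    {ε : ℝ} (hε : 0 < ε) :
    ∃ p ∈ E, ∃ w, 0 < w ∧ w ≤ ε ∧
      ENNReal.ofReal w ≤ volume (E ∩ Icc (p - w) (p + w)) := by
  have hne : volume.restrict E ≠ 0 := by
    intro h0
    rw [← Measure.restrict_apply_univ E, h0] at hpos
    simp at hpos
  haveI : NeBot (ae (volume.restrict E)) := ae_neBot.mpr hne
  have h1 := Besicovitch.ae_tendsto_measure_inter_div volume E
  have h2 : ∀ᵐ x ∂volume.restrict E, x ∈ E := ae_restrict_mem hE
  obtain ⟨p, hp, hpE⟩ := (h1.and h2).exists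
  have h3 : ∀ᶠ w in 𝓝[>] (0:ℝ),
      (2:ℝ≥0∞)⁻¹ < volume (E ∩ Metric.closedBall p w) / volume (Metric.closedBall p w) :=
    hp.eventually (lt_mem_nhds (by norm_num))
  have h4 : ∀ᶠ w in 𝓝[>] (0:ℝ), w ∈ Ioc 0 ε :=
    eventually_of_mem (Ioc_mem_nhdsGT_of_mem ⟨le_rfl, hε⟩) (fun _ h => h)
  obtain ⟨w, hw1, hw2⟩ := (h3.and h4).exists
  refine ⟨p, hpE, w, hw2.1, hw2.2, ?_⟩
  have hball : volume (Metric.closedBall p w) = ENNReal.ofReal (2 * w) :=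
    Real.volume_closedBall p w
  have hb0 : volume (Metric.closedBall p w) ≠ 0 := by
    rw [hball]; simp [ENNReal.ofReal_eq_zero]; linarith [hw2.1]
  have hbtop : volume (Metric.closedBall p w) ≠ ⊤ := by rw [hball]; exact ENNReal.ofReal_ne_top
  have key : (2:ℝ≥0∞)⁻¹ * volume (Metric.closedBall p w)
      ≤ volume (E ∩ Metric.closedBall p w) := by
    have := mul_le_mul_left hw1.le (volume (Metric.closedBall p w))
    rwa [ENNReal.div_mul_cancel hb0 hbtop] at this
  have heq : (2:ℝ≥0∞)⁻¹ * volume (Metric.closedBall p w) = ENNReal.ofReal w := by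
    rw [hball]
    rw [show (2:ℝ)*w = 2*w from rfl, ENNReal.ofReal_mul (by norm_num : (0:ℝ) ≤ 2)]
    rw [← mul_assoc, ENNReal.ofReal_ofNat]
    rw [ENNReal.inv_mul_cancel (by norm_num) (by norm_num), one_mul]
  rw [← Real.closedBall_eq_Icc]
  rw [heq] at key
  exact key



/-- Measure of the union of grid intervals intersected with a period window. -/
lemma grid_measure {N : ℕ} (hN : 1 ≤ (N:ℝ)) {w : ℝ} (hw0 : 0 < w) (hw1 : w ≤ 1) (c : ℝ) :
    volume ((⋃ k : ℤ, Icc (2*π*k/N - w) (2*π*k/N + w)) ∩ Icc (c - π) (c + π))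
      ≤ ENNReal.ofReal (6 * N * w) := by
  have hπ : (0:ℝ) < π := pi_pos
  have hπ1 : (1:ℝ) ≤ π := by linarith [pi_gt_three]
  have hN0 : (0:ℝ) < N := by linarith
  set l : ℤ := ⌈(N:ℝ) * (c - π - 1) / (2*π)⌉ with hl
  set u : ℤ := ⌊(N:ℝ) * (c + π + 1) / (2*π)⌋ with hu
  set K : Finset ℤ := Finset.Icc l u with hK
  -- inclusion
  have hsub : (⋃ k : ℤ, Icc (2*π*k/N - w) (2*π*k/N + w)) ∩ Icc (c - π) (c + π)
      ⊆ ⋃ k ∈ K, Icc (2*π*(k:ℝ)/N - w) (2*π*k/N + w) := by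
    rintro t ⟨ht1, ht2⟩
    obtain ⟨k, hk⟩ := mem_iUnion.1 ht1
    have hck1 : c - π - 1 ≤ 2*π*(k:ℝ)/N := by
      have := hk.2; have := ht2.1; linarith
    have hck2 : 2*π*(k:ℝ)/N ≤ c + π + 1 := by
      have := hk.1; have := ht2.2; linarith
    have h2π : (0:ℝ) < 2*π := by linarith
    have hkmem : k ∈ K := by
      rw [hK, Finset.mem_Icc]
      constructor
      · rw [hl]
        apply Int.ceil_le.2
        rw [div_le_iff₀ h2π]
        calc (N:ℝ) * (c - π - 1) ≤ N * (2*π*(k:ℝ)/N) := by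
              apply mul_le_mul_of_nonneg_left hck1 hN0.le
        _ = (k:ℝ) * (2*π) := by field_simp
      · rw [hu]
        apply Int.le_floor.2
        rw [le_div_iff₀ h2π]
        calc (k:ℝ) * (2*π) = N * (2*π*(k:ℝ)/N) := by field_simp
        _ ≤ (N:ℝ) * (c + π + 1) := by
              apply mul_le_mul_of_nonneg_left hck2 hN0.le
    exact mem_biUnion hkmem hk
  have hcard : (K.card : ℝ) ≤ 3 * N := by
    rw [hK, Int.card_Icc]
    rcases le_or_gt (u + 1 - l) 0 with hc | hc
    · rw [Int.toNat_of_nonpos hc]; push_cast; positivity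
    · have h0 : ((u + 1 - l).toNat : ℤ) = u + 1 - l := Int.toNat_of_nonneg hc.le
      have h1 : ((u + 1 - l).toNat : ℝ) = ((u:ℝ) + 1 - l) := by
        exact_mod_cast congrArg (fun z : ℤ => (z:ℝ)) h0
      rw [h1]
      have h2 : (u:ℝ) ≤ (N:ℝ) * (c + π + 1) / (2*π) := Int.floor_le _
      have h3 : (N:ℝ) * (c - π - 1) / (2*π) ≤ l := Int.le_ceil _
      have h4 : (N:ℝ) * (c + π + 1) / (2*π) - (N:ℝ) * (c - π - 1) / (2*π)
          = N + N / π := by field_simp; ring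
      have h5 : (N:ℝ) / π ≤ N := by
        rw [div_le_iff₀ hπ]; nlinarith
      linarith
  calc volume ((⋃ k : ℤ, Icc (2*π*k/N - w) (2*π*k/N + w)) ∩ Icc (c - π) (c + π))
      ≤ volume (⋃ k ∈ K, Icc (2*π*(k:ℝ)/N - w) (2*π*k/N + w)) := measure_mono hsub
    _ ≤ ∑ k ∈ K, volume (Icc (2*π*(k:ℝ)/N - w) (2*π*k/N + w)) :=
        measure_biUnion_finset_le K _
    _ = ∑ k ∈ K, ENNReal.ofReal (2*w) := by
        refine Finset.sum_congr rfl (fun k _ => ?_)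
        rw [Real.volume_Icc]; congr 1; ring
    _ = (K.card : ℝ≥0∞) * ENNReal.ofReal (2*w) := by
        rw [Finset.sum_const, nsmul_eq_mul]
    _ ≤ ENNReal.ofReal (3*N) * ENNReal.ofReal (2*w) := by
        apply mul_le_mul_left
        rw [← ENNReal.ofReal_natCast]
        exact ENNReal.ofReal_le_ofReal hcard
    _ = ENNReal.ofReal (6 * N * w) := by
        rw [← ENNReal.ofReal_mul (by positivity)]
        congr 1; ring

/-- Stage-`n` selection of parameters. -/
lemma exists_stage (φ : ℝ → ℝ → ℝ) (lam : ℝ → ℝ)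
    (hmeas : ∀ r ∈ Set.Ioo (0:ℝ) 1, Measurable (φ r))
    (hbdd : ∀ r ∈ Set.Ioo (0:ℝ) 1, ∃ M, ∀ t, |φ r t| ≤ M)
    (hnonneg : ∀ r ∈ Set.Ioo (0:ℝ) 1, ∀ t, 0 ≤ φ r t)
    {D : ℝ} (hD1 : 1 ≤ D)
    (hD : ∀ r ∈ Set.Ioo (0:ℝ) 1, (∫ x in (-π)..π, symMaj05 (φ r) x) ≤ D)
    (hlampos : ∀ r ∈ Set.Ioo (0:ℝ) 1, 0 < lam r)
    (hlam0 : Tendsto lam (𝓝[<] (1 : ℝ)) (𝓝 0))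
    (hbound : ∀ C, ∃ᶠ r in 𝓝[<] (1 : ℝ), C ≤ lam r * supNorm05 (φ r)) (n : ℕ) :
    ∃ (r p w : ℝ) (N : ℕ) (a : ℝ),
      r ∈ Set.Ioo (0:ℝ) 1 ∧ 1 - 1/((n:ℝ)+1) < r ∧ 0 < lam r ∧ lam r ≤ 1 ∧
      0 < w ∧ w ≤ 1 ∧ |p| ≤ lam r / 4 ∧
      1 ≤ (N:ℝ) ∧ 2*π/(N:ℝ) ≤ lam r / 2 ∧
      0 < a ∧ (N:ℝ) * w ≤ (1/2)^n ∧ 2*a*(N:ℝ)*w ≤ (1/2)^n ∧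
      ((n:ℝ)+1) ≤ a * ∫ s in (p-w)..(p+w), φ r s := by
  have hπ : (0:ℝ) < π := pi_pos
  have h2n : (1:ℝ) ≤ 2^n := one_le_pow₀ (by norm_num)
  have hn1 : (1:ℝ) ≤ (n:ℝ) + 1 := by linarith [Nat.cast_nonneg (α := ℝ) n]
  set B : ℝ := (32*π + 4*D) * ((n:ℝ)+1) * 2^n with hBdef
  have hsum : (0:ℝ) < 32*π + 4*D := by linarith
  have hBpos : 0 < B := mul_pos (mul_pos hsum (by positivity)) (by positivity)
  have hB4D : 4*D ≤ B := by
    have hmul : 1 ≤ ((n:ℝ)+1)*2^n := by nlinarith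
    have h1 : (32*π+4*D) ≤ (32*π+4*D)*(((n:ℝ)+1)*2^n) :=
      le_mul_of_one_le_right (by linarith) hmul
    calc 4*D ≤ 32*π+4*D := by linarith
    _ ≤ (32*π+4*D)*(((n:ℝ)+1)*2^n) := h1
    _ = B := by rw [hBdef]; ring
  -- choose r
  have hIooE : ∀ᶠ r in 𝓝[<] (1:ℝ), r ∈ Set.Ioo (0:ℝ) 1 :=
    eventually_mem_set.mpr (Ioo_mem_nhdsLT_of_mem ⟨by norm_num, le_rfl⟩)
  have hIoo2E : ∀ᶠ r in 𝓝[<] (1:ℝ), r ∈ Set.Ioo (1 - 1/((n:ℝ)+1)) 1 :=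
    eventually_mem_set.mpr (Ioo_mem_nhdsLT_of_mem ⟨by
      have : 0 < 1/((n:ℝ)+1) := by positivity
      linarith, le_rfl⟩)
  have hev3 : ∀ᶠ r in 𝓝[<] (1:ℝ), lam r < 1 := hlam0.eventually (gt_mem_nhds one_pos)
  obtain ⟨r, hrB, hr1, hr, hrn⟩ :=
    ((hbound B).and_eventually (hev3.and (hIooE.and hIoo2E))).exists
  have hlamr : 0 < lam r := hlampos r hr
  have hlam1 : lam r ≤ 1 := hr1.le
  obtain ⟨M, hM⟩ := hbdd r hr
  set K := supNorm05 (φ r) with hK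
  have hKB : B / lam r ≤ K := by
    rw [div_le_iff₀ hlamr]; linarith [hrB]
  set h : ℝ := B / (2 * lam r) with hh
  have hhpos : 0 < h := by positivity
  have hhK : h < K := by
    have : h < B / lam r := by
      apply div_lt_div_of_pos_left hBpos hlamr; linarith
    linarith
  set E := {t | h ≤ φ r t} ∩ Ioc (-π) π with hE
  have hEmeas : MeasurableSet E :=
    (measurableSet_le measurable_const (hmeas r hr)).inter measurableSet_Ioc
  have hEpos : 0 < volume E := exists_spike (φ r) (hmeas r hr) (hnonneg r hr) hhpos.le hhK
  have hEsub : E ⊆ Icc (-(lam r/4)) (lam r/4) := by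
    intro t ht
    have htπ : |t| ≤ π := abs_le.2 ⟨ht.2.1.le, ht.2.2⟩
    have h2 : 2 * |t| * h ≤ D := (localize (φ r) hM hhpos htπ ht.1).trans (hD r hr)
    have h3 : |t| * B ≤ D * lam r := by
      have : 2 * |t| * h = |t| * B / lam r := by rw [hh]; field_simp
      rw [this] at h2
      calc |t| * B = (|t| * B / lam r) * lam r := by field_simp
      _ ≤ D * lam r := mul_le_mul_of_nonneg_right h2 hlamr.le
    have h4 : |t| ≤ lam r / 4 := by
      nlinarith [mul_le_mul_of_nonneg_left hB4D (abs_nonneg t), abs_nonneg t]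
    exact ⟨by linarith [abs_le.1 h4 |>.1], by linarith [abs_le.1 h4 |>.2]⟩
  -- grid size
  set N : ℕ := ⌈4*π/lam r⌉₊ with hN
  have hN4 : 4*π/lam r ≤ (N:ℝ) := Nat.le_ceil _
  have h4π1 : 1 ≤ 4*π/lam r := by
    rw [le_div_iff₀ hlamr]; nlinarith [pi_gt_three]
  have hN1 : 1 ≤ (N:ℝ) := h4π1.trans hN4
  have hN0 : (0:ℝ) < N := by linarith
  have hN8 : (N:ℝ) ≤ 8*π/lam r := by
    have := Nat.ceil_lt_add_one (by positivity : (0:ℝ) ≤ 4*π/lam r)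
    have h8 : 4*π/lam r + 1 ≤ 8*π/lam r := by
      have : 4*π/lam r + 4*π/lam r = 8*π/lam r := by ring
      linarith
    linarith
  have hN2 : 2*π/(N:ℝ) ≤ lam r / 2 := by
    rw [div_le_iff₀ hN0]
    have hc : (lam r/2) * (4*π/lam r) = 2*π := by field_simp; ring
    nlinarith
  -- density point
  have hεpos : 0 < min (lam r/4) (min 1 ((1/2:ℝ)^n / N)) := by positivity
  obtain ⟨p, hpE, w, hw0, hwε, hwvol⟩ := exists_density_pt hEmeas hEpos hεpos
  have hwlam : w ≤ lam r / 4 := hwε.trans (min_le_left _ _)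
  have hw1 : w ≤ 1 := hwε.trans ((min_le_right _ _).trans (min_le_left _ _))
  have hwN : w ≤ (1/2:ℝ)^n / N := hwε.trans ((min_le_right _ _).trans (min_le_right _ _))
  have hNw : (N:ℝ) * w ≤ (1/2)^n := by
    rw [div_eq_mul_inv] at hwN
    calc (N:ℝ) * w ≤ (N:ℝ) * ((1/2)^n * (N:ℝ)⁻¹) := by
          apply mul_le_mul_of_nonneg_left hwN hN0.le
    _ = (1/2)^n := by
          rw [mul_comm ((1/2:ℝ)^n) _ , ← mul_assoc]
          rw [mul_inv_cancel₀ (by linarith : (N:ℝ) ≠ 0), one_mul]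
  have hp4 : |p| ≤ lam r / 4 := by
    have := hEsub hpE
    exact abs_le.2 ⟨by linarith [this.1], this.2⟩
  set a : ℝ := ((n:ℝ)+1) / (h * w) with ha
  have hapos : 0 < a := by positivity
  -- lower bound for the integral over the window
  have hIocvol : ENNReal.ofReal w ≤ volume (E ∩ Ioc (p-w) (p+w)) := by
    have hsub2 : E ∩ Icc (p-w) (p+w) ⊆ (E ∩ Ioc (p-w) (p+w)) ∪ {p-w} := by
      rintro t ⟨ht1, ht2⟩
      rcases eq_or_lt_of_le ht2.1 with heq | hlt
      · exact Or.inr (by simp [← heq])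
      · exact Or.inl ⟨ht1, hlt, ht2.2⟩
    calc ENNReal.ofReal w ≤ volume (E ∩ Icc (p-w) (p+w)) := hwvol
    _ ≤ volume ((E ∩ Ioc (p-w) (p+w)) ∪ {p-w}) := measure_mono hsub2
    _ ≤ volume (E ∩ Ioc (p-w) (p+w)) + volume ({p-w} : Set ℝ) := measure_union_le _ _
    _ = volume (E ∩ Ioc (p-w) (p+w)) := by rw [Real.volume_singleton, add_zero]
  have hIphi : IntegrableOn (φ r) (Ioc (p-w) (p+w)) volume := by
    apply Integrable.mono' (g := fun _ => M)
    · exact integrableOn_const measure_Ioc_lt_top.ne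
    · exact (hmeas r hr).aestronglyMeasurable
    · exact ae_of_all _ (fun t => by rw [Real.norm_eq_abs]; exact hM t)
  have hfinvol : volume (E ∩ Ioc (p-w) (p+w)) ≠ ⊤ :=
    ne_top_of_le_ne_top measure_Ioc_lt_top.ne (measure_mono inter_subset_right)
  have hstep1 : h * w ≤ ∫ s in (p-w)..(p+w), φ r s := by
    rw [intervalIntegral.integral_of_le (by linarith)]
    have htoReal : w ≤ (volume (E ∩ Ioc (p-w) (p+w))).toReal := by
      have := ENNReal.toReal_mono hfinvol hIocvol
      rwa [ENNReal.toReal_ofReal hw0.le] at this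
    have hconstI : IntegrableOn (fun _ => h) (E ∩ Ioc (p-w) (p+w)) volume :=
      integrableOn_const hfinvol
    have hmono := setIntegral_mono_on hconstI (hIphi.mono_set inter_subset_right)
      (hEmeas.inter measurableSet_Ioc) (fun t ht => ht.1.1)
    rw [setIntegral_const, smul_eq_mul] at hmono
    calc h * w ≤ h * (volume (E ∩ Ioc (p-w) (p+w))).toReal :=
          mul_le_mul_of_nonneg_left htoReal hhpos.le
    _ = (volume (E ∩ Ioc (p-w) (p+w))).toReal * h := by ring
    _ ≤ ∫ t in E ∩ Ioc (p-w) (p+w), φ r t := hmono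
    _ ≤ ∫ t in Ioc (p-w) (p+w), φ r t := by
        apply setIntegral_mono_set hIphi
        · exact ae_of_all _ (fun t => hnonneg r hr t)
        · exact HasSubset.Subset.eventuallyLE inter_subset_right
  refine ⟨r, p, w, N, a, hr, hrn.1, hlamr, hlam1, hw0, hw1, hp4, hN1, hN2, hapos, hNw, ?_, ?_⟩
  · -- 2*a*N*w ≤ (1/2)^n
    have hNL : (N:ℝ) * lam r ≤ 8*π := by
      rw [div_eq_mul_inv] at hN8
      calc (N:ℝ) * lam r ≤ (8*π*(lam r)⁻¹) * lam r :=
            mul_le_mul_of_nonneg_right hN8 hlamr.le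
      _ = 8*π := by field_simp
    have hBne : B ≠ 0 := hBpos.ne'
    have e1 : 2*a*(N:ℝ)*w = 4*((n:ℝ)+1)*((N:ℝ)*lam r)/B := by
      rw [ha, hh]
      field_simp
      ring
    have hpow : (1/2:ℝ)^n * 2^n = 1 := by
      rw [← mul_pow]; norm_num
    have hrhs : (1/2:ℝ)^n * B = (32*π+4*D)*((n:ℝ)+1) := by
      rw [hBdef]; linear_combination (32*π+4*D)*((n:ℝ)+1) * hpow
    calc 2*a*(N:ℝ)*w = 4*((n:ℝ)+1)*((N:ℝ)*lam r)/B := e1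
    _ ≤ 4*((n:ℝ)+1)*(8*π)/B := by gcongr
    _ ≤ (1/2)^n := by
        rw [div_le_iff₀ hBpos, hrhs]
        nlinarith [mul_nonneg (by linarith : (0:ℝ) ≤ 4*D) (by linarith : (0:ℝ) ≤ (n:ℝ)+1)]
  · -- (n+1) ≤ a * ∫
    have := mul_le_mul_of_nonneg_left hstep1 hapos.le
    have e3 : a * (h * w) = (n:ℝ)+1 := by
      rw [ha]; field_simp
    linarith

end Sharp5

open Sharp5 in
set_option maxHeartbeats 1000000 in
/-- Theorem 3: if `{φ_r}` is a nonnegative approximation of identity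
and `limsup λ(r)‖φ_r‖_∞ = ∞`, then there is a nonnegative `f ∈ L¹(𝕋)` whose
convolutions `Φ_r(θ, f)` have `limsup_{r→1} sup_{|θ-x|≤λ(r)} Φ_r(θ, f) = ∞`
at every point `x` of the circle. -/
theorem sharpness_divergence_everywhere
    (φ : ℝ → ℝ → ℝ) (lam : ℝ → ℝ)
    (hmeas : ∀ r ∈ Set.Ioo (0 : ℝ) 1, Measurable (φ r))
    (hper : ∀ r ∈ Set.Ioo (0 : ℝ) 1, ∀ t, φ r (t + 2 * π) = φ r t)
    (hbdd : ∀ r ∈ Set.Ioo (0 : ℝ) 1, ∃ M, ∀ t, |φ r t| ≤ M)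
    (hnonneg : ∀ r ∈ Set.Ioo (0 : ℝ) 1, ∀ t, 0 ≤ φ r t)
    (hAI1 : Tendsto (fun r => ∫ t in (-π)..π, φ r t) (𝓝[<] (1 : ℝ)) (𝓝 1))
    (hAI2 : ∀ x ∈ Set.Ioo (0 : ℝ) π,
      Tendsto (fun r => symMaj05 (φ r) x) (𝓝[<] (1 : ℝ)) (𝓝 0))
    (hAI3 : ∃ C, ∀ r ∈ Set.Ioo (0 : ℝ) 1, (∫ x in (-π)..π, symMaj05 (φ r) x) ≤ C)
    (hlampos : ∀ r ∈ Set.Ioo (0 : ℝ) 1, 0 < lam r)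
    (hlamdec : AntitoneOn lam (Set.Ioo (0 : ℝ) 1))
    (hlam0 : Tendsto lam (𝓝[<] (1 : ℝ)) (𝓝 0))
    (hbound : ∀ C, ∃ᶠ r in 𝓝[<] (1 : ℝ), C ≤ lam r * supNorm05 (φ r)) :
    ∃ f : ℝ → ℝ, (∀ t, 0 ≤ f t) ∧ (∀ t, f (t + 2 * π) = f t) ∧
      IntervalIntegrable f volume (-π) π ∧
      ∀ x : ℝ, ∀ C : ℝ, ∃ᶠ r in 𝓝[<] (1 : ℝ),
        ∃ θ, |θ - x| ≤ lam r ∧ C ≤ ∫ t in (-π)..π, φ r (θ - t) * f t := by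
  classical
  have hπ : (0:ℝ) < π := pi_pos
  have hπ3 : (3:ℝ) < π := pi_gt_three
  obtain ⟨C₀, hC₀⟩ := hAI3
  have hD1 : (1:ℝ) ≤ max C₀ 1 := le_max_right _ _
  have hD : ∀ r ∈ Set.Ioo (0:ℝ) 1, (∫ x in (-π)..π, symMaj05 (φ r) x) ≤ max C₀ 1 :=
    fun r hr => (hC₀ r hr).trans (le_max_left _ _)
  choose r p w N a hIoo hrlow hlamr hlam1 hw0 hw1 hp4 hN1 hN2 hapos hNw haNw hmain using
    fun n => Sharp5.exists_stage φ lam hmeas hbdd hnonneg hD1 hD hlampos hlam0 hbound n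
  -- the grid supports
  set S : ℕ → Set ℝ := fun n => ⋃ k : ℤ, Icc (2*π*k/(N n) - w n) (2*π*k/(N n) + w n) with hS
  have hSmeas : ∀ n, MeasurableSet (S n) := fun n => MeasurableSet.iUnion (fun _ => measurableSet_Icc)
  set fn : ℕ → ℝ → ℝ := fun n => (S n).indicator (fun _ => a n) with hfn
  have hfnnn : ∀ n t, 0 ≤ fn n t := fun n t => Set.indicator_nonneg (fun _ _ => (hapos n).le) t
  have hfnle : ∀ n t, fn n t ≤ a n := by
    intro n t
    by_cases h : t ∈ S n
    · rw [hfn]; simp only [Set.indicator_of_mem h]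
      exact le_rfl
    · rw [hfn]; simp only [Set.indicator_of_notMem h]; exact (hapos n).le

  have hfnmeas : ∀ n, Measurable (fn n) := fun n => measurable_const.indicator (hSmeas n)
  set G : ℝ → ℝ≥0∞ := fun t => ∑' n, ENNReal.ofReal (fn n t) with hG
  have hGmeas : Measurable G :=
    Measurable.ennreal_tsum (fun n => ENNReal.measurable_ofReal.comp (hfnmeas n))
  set f : ℝ → ℝ := fun t => (G t).toReal with hf
  have hfmeas : Measurable f := hGmeas.ennreal_toReal
  have hfnn : ∀ t, 0 ≤ f t := fun t => ENNReal.toReal_nonneg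
  -- periodicity
  have hNne : ∀ n, ((N n : ℝ)) ≠ 0 := fun n => by linarith [hN1 n]
  have hSper : ∀ n t, t + 2*π ∈ S n ↔ t ∈ S n := by
    intro n t
    simp only [hS, mem_iUnion, mem_Icc]
    constructor
    · rintro ⟨k, hk1, hk2⟩
      refine ⟨k - (N n : ℤ), ?_, ?_⟩
      · have e : 2*π*((k - (N n : ℤ) : ℤ):ℝ)/(N n) = 2*π*(k:ℝ)/(N n) - 2*π := by
          push_cast; field_simp [hNne n]
        rw [e]; linarith
      · have e : 2*π*((k - (N n : ℤ) : ℤ):ℝ)/(N n) = 2*π*(k:ℝ)/(N n) - 2*π := by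
          push_cast; field_simp [hNne n]
        rw [e]; linarith
    · rintro ⟨k, hk1, hk2⟩
      refine ⟨k + (N n : ℤ), ?_, ?_⟩
      · have e : 2*π*((k + (N n : ℤ) : ℤ):ℝ)/(N n) = 2*π*(k:ℝ)/(N n) + 2*π := by
          push_cast; field_simp [hNne n]
        rw [e]; linarith
      · have e : 2*π*((k + (N n : ℤ) : ℤ):ℝ)/(N n) = 2*π*(k:ℝ)/(N n) + 2*π := by
          push_cast; field_simp [hNne n]
        rw [e]; linarith
  have hfnper : ∀ n t, fn n (t + 2*π) = fn n t := by
    intro n t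
    by_cases h : t ∈ S n
    · rw [hfn]; simp only [Set.indicator_of_mem ((hSper n t).2 h), Set.indicator_of_mem h]
    · rw [hfn]
      simp only [Set.indicator_of_notMem h,
        Set.indicator_of_notMem (fun hc => h ((hSper n t).1 hc))]
  have hfper : ∀ t, f (t + 2*π) = f t := by
    intro t
    rw [hf]
    simp only
    congr 1
    rw [hG]
    simp only
    exact tsum_congr (fun n => by rw [hfnper n t])
  -- the integral bound for G on any window of length 2π
  have hGint : ∀ c : ℝ, (∫⁻ t in Icc (c - π) (c + π), G t) ≤ ENNReal.ofReal 6 := by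
    intro c
    have heq : (∫⁻ t in Icc (c - π) (c + π), G t)
        = ∑' n, ∫⁻ t in Icc (c - π) (c + π), ENNReal.ofReal (fn n t) := by
      rw [hG]
      exact lintegral_tsum (fun n => (ENNReal.measurable_ofReal.comp (hfnmeas n)).aemeasurable)
    rw [heq]
    have hterm : ∀ n, (∫⁻ t in Icc (c - π) (c + π), ENNReal.ofReal (fn n t))
        ≤ ENNReal.ofReal (3 * (1/2)^n) := by
      intro n
      have hind : (fun t => ENNReal.ofReal (fn n t))
          = (S n).indicator (fun _ => ENNReal.ofReal (a n)) := by
        funext t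
        by_cases h : t ∈ S n
        · simp [hfn, h]
        · simp [hfn, h]
      rw [hind, lintegral_indicator (hSmeas n), Measure.restrict_restrict (hSmeas n),
        setLIntegral_const]
      calc ENNReal.ofReal (a n) * volume (S n ∩ Icc (c - π) (c + π))
          ≤ ENNReal.ofReal (a n) * ENNReal.ofReal (6 * (N n) * w n) := by
            apply mul_le_mul_right
            exact Sharp5.grid_measure (hN1 n) (hw0 n) (hw1 n) c
      _ = ENNReal.ofReal (a n * (6 * (N n) * w n)) := by
            rw [← ENNReal.ofReal_mul (hapos n).le]
      _ ≤ ENNReal.ofReal (3 * (1/2)^n) := by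
            apply ENNReal.ofReal_le_ofReal
            have := haNw n
            nlinarith [hapos n, hw0 n, hN1 n]
    calc (∑' n, ∫⁻ t in Icc (c - π) (c + π), ENNReal.ofReal (fn n t))
        ≤ ∑' n, ENNReal.ofReal (3 * (1/2)^n) := ENNReal.tsum_le_tsum hterm
    _ = ENNReal.ofReal (∑' n : ℕ, 3 * (1/2)^n) :=
        (ENNReal.ofReal_tsum_of_nonneg (fun n => by positivity)
          (summable_geometric_two.mul_left 3)).symm
    _ ≤ ENNReal.ofReal 6 := by
        apply ENNReal.ofReal_le_ofReal
        rw [tsum_mul_left, tsum_geometric_two]; norm_num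
  have hGfin : ∀ c : ℝ, ∀ᵐ t ∂(volume.restrict (Icc (c - π) (c + π))), G t < ⊤ := by
    intro c
    exact ae_lt_top hGmeas ((hGint c).trans_lt ENNReal.ofReal_lt_top).ne
  have hfge : ∀ n t, G t < ⊤ → fn n t ≤ f t := by
    intro n t hGt
    have h1 : ENNReal.ofReal (fn n t) ≤ G t := ENNReal.le_tsum n
    have h2 := ENNReal.toReal_mono hGt.ne h1
    rwa [ENNReal.toReal_ofReal (hfnnn n t)] at h2
  -- integrability of f on windows
  have hfint : ∀ c : ℝ, IntegrableOn f (Icc (c - π) (c + π)) volume := by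
    intro c
    refine ⟨hfmeas.aestronglyMeasurable, ?_⟩
    rw [hasFiniteIntegral_iff_ofReal (ae_of_all _ hfnn)]
    have hle : ∀ t, ENNReal.ofReal (f t) ≤ G t := fun t => ENNReal.ofReal_toReal_le
    exact ((lintegral_mono hle).trans (hGint c)).trans_lt ENNReal.ofReal_lt_top
  have hfII : IntervalIntegrable f volume (-π) π := by
    rw [intervalIntegrable_iff]
    apply (hfint 0).mono_set
    rw [uIoc_of_le (by linarith : -π ≤ π)]
    refine Ioc_subset_Icc_self.trans ?_
    intro t ht
    exact ⟨by linarith [ht.1], by linarith [ht.2]⟩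
  refine ⟨f, hfnn, hfper, hfII, ?_⟩
  intro x C
  -- the sequence r n converges to 1 from the left
  have hrtend : Tendsto r atTop (𝓝[<] (1:ℝ)) := by
    rw [tendsto_nhdsWithin_iff]
    constructor
    · have hlow : Tendsto (fun n : ℕ => 1 - 1/((n:ℝ)+1)) atTop (𝓝 1) := by
        have h0 := tendsto_one_div_add_atTop_nhds_zero_nat (𝕜 := ℝ)
        have := tendsto_const_nhds (x := (1:ℝ)) (f := atTop (α := ℕ)) |>.sub h0
        simpa using this
      exact tendsto_of_tendsto_of_tendsto_of_le_of_le hlow tendsto_const_nhds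
        (fun n => (hrlow n).le) (fun n => (hIoo n).2.le)
    · exact Eventually.of_forall (fun n => (hIoo n).2)
  apply hrtend.frequently
  obtain ⟨n₀, hn₀⟩ := exists_nat_ge C
  refine (eventually_atTop.2 ⟨n₀, fun n hn => ?_⟩).frequently
  have hCn : C ≤ (n:ℝ)+1 := by
    have : (n₀:ℝ) ≤ (n:ℝ) := by exact_mod_cast hn
    linarith
  -- the grid point near x
  have hNn0 : (0:ℝ) < N n := by linarith [hN1 n]
  set k : ℤ := round (x * (N n) / (2*π)) with hk
  set g : ℝ := 2*π*(k:ℝ)/(N n) with hg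
  have hgx : |g - x| ≤ π/(N n) := by
    have hround : |x * (N n)/(2*π) - (k:ℝ)| ≤ 1/2 := abs_sub_round _
    have e : g - x = (2*π/(N n)) * ((k:ℝ) - x*(N n)/(2*π)) := by
      rw [hg]; field_simp
    rw [e, abs_mul, abs_of_pos (by positivity : (0:ℝ) < 2*π/(N n)), abs_sub_comm]
    calc 2*π/(N n) * |x * (N n)/(2*π) - (k:ℝ)| ≤ 2*π/(N n) * (1/2) := by
          apply mul_le_mul_of_nonneg_left hround (by positivity)
    _ = π/(N n) := by ring
  have hπN : π/(N n) ≤ lam (r n)/4 := by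
    have := hN2 n
    have e : π/(N n) = (2*π/(N n))/2 := by ring
    rw [e]; linarith
  set θ : ℝ := g + p n with hθ
  have hθx : |θ - x| ≤ lam (r n) := by
    have : θ - x = (g - x) + p n := by rw [hθ]; ring
    rw [this]
    calc |g - x + p n| ≤ |g - x| + |p n| := abs_add_le _ _
    _ ≤ lam (r n)/4 + lam (r n)/4 := add_le_add (hgx.trans hπN) (hp4 n)
    _ ≤ lam (r n) := by linarith [hlamr n]
  refine ⟨θ, hθx, ?_⟩
  -- periodic shift of the integral
  have hFper : Function.Periodic (fun t => φ (r n) (θ - t) * f t) (2*π) := by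
    intro t
    have h1 : φ (r n) (θ - (t + 2*π)) = φ (r n) (θ - t) := by
      have h2 := hper (r n) (hIoo n) (θ - t - 2*π)
      rw [show θ - t - 2*π + 2*π = θ - t from by ring] at h2
      rw [show θ - (t + 2*π) = θ - t - 2*π from by ring, h2]
    simp only [h1, hfper t]
  have hshift : (∫ t in (-π)..π, φ (r n) (θ - t) * f t)
      = ∫ t in (g-π)..(g+π), φ (r n) (θ - t) * f t := by
    have h1 := hFper.intervalIntegral_add_eq (-π) (g - π)
    rw [show -π + 2*π = π from by ring, show g - π + 2*π = g + π from by ring] at h1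
    exact h1
  obtain ⟨M, hM⟩ := hbdd (r n) (hIoo n)
  have hφm : Measurable (fun t => φ (r n) (θ - t)) :=
    (hmeas _ (hIoo n)).comp (measurable_const.sub measurable_id)
  have hFint : IntervalIntegrable (fun t => φ (r n) (θ - t) * f t) volume (g-π) (g+π) := by
    rw [intervalIntegrable_iff_integrableOn_Ioc_of_le (by linarith : g-π ≤ g+π)]
    apply Integrable.bdd_mul ((hfint g).mono_set Ioc_subset_Icc_self)
      hφm.aestronglyMeasurable
    exact ae_of_all _ (fun t => by rw [Real.norm_eq_abs]; exact hM _)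
  have hfnint : ∀ u v : ℝ, IntervalIntegrable (fun t => φ (r n) (θ - t) * fn n t) volume u v := by
    intro u v
    rw [intervalIntegrable_iff]
    have hbase : IntegrableOn (fn n) (Set.uIoc u v) volume := by
      apply Integrable.mono' (integrableOn_const (C := a n) ?_) (hfnmeas n).aestronglyMeasurable
      · exact ae_of_all _ (fun t => by
          rw [Real.norm_eq_abs, abs_of_nonneg (hfnnn n t)]; exact hfnle n t)
      · rw [Set.uIoc]; exact measure_Ioc_lt_top.ne
    apply Integrable.bdd_mul hbase hφm.aestronglyMeasurable
    exact ae_of_all _ (fun t => by rw [Real.norm_eq_abs]; exact hM _)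
  have hmono : (∫ t in (g-π)..(g+π), φ (r n) (θ - t) * fn n t)
      ≤ ∫ t in (g-π)..(g+π), φ (r n) (θ - t) * f t := by
    apply intervalIntegral.integral_mono_ae_restrict (by linarith : g-π ≤ g+π)
      (hfnint _ _) hFint
    filter_upwards [hGfin g] with t hGt
    exact mul_le_mul_of_nonneg_left (hfge n t hGt) (hnonneg _ (hIoo n) _)
  have hwπ : w n ≤ π := (hw1 n).trans (by linarith)
  have hsplit : (∫ t in (g - w n)..(g + w n), φ (r n) (θ - t) * fn n t)
      ≤ ∫ t in (g-π)..(g+π), φ (r n) (θ - t) * fn n t := by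
    have e1 := intervalIntegral.integral_add_adjacent_intervals
      (a := g - π) (b := g - w n) (c := g + w n) (hfnint _ _) (hfnint _ _)
    have e2 := intervalIntegral.integral_add_adjacent_intervals
      (a := g - π) (b := g + w n) (c := g + π) (hfnint _ _) (hfnint _ _)
    have pos1 : (0:ℝ) ≤ ∫ t in (g-π)..(g - w n), φ (r n) (θ - t) * fn n t :=
      intervalIntegral.integral_nonneg (by linarith [hw0 n])
        (fun t _ => mul_nonneg (hnonneg _ (hIoo n) _) (hfnnn n t))
    have pos2 : (0:ℝ) ≤ ∫ t in (g + w n)..(g+π), φ (r n) (θ - t) * fn n t :=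
      intervalIntegral.integral_nonneg (by linarith [hw0 n])
        (fun t _ => mul_nonneg (hnonneg _ (hIoo n) _) (hfnnn n t))
    linarith
  have hcore : (∫ t in (g - w n)..(g + w n), φ (r n) (θ - t) * fn n t)
      = a n * ∫ s in (p n - w n)..(p n + w n), φ (r n) s := by
    have hEq : EqOn (fun t => φ (r n) (θ - t) * fn n t) (fun t => φ (r n) (θ - t) * a n)
        (uIcc (g - w n) (g + w n)) := by
      intro t ht
      rw [uIcc_of_le (by linarith [hw0 n])] at ht
      have htS : t ∈ S n := by
        simp only [hS, mem_iUnion, mem_Icc]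
        exact ⟨k, by rw [← hg]; exact ht.1, by rw [← hg]; exact ht.2⟩
      simp only [hfn, Set.indicator_of_mem htS]
    rw [intervalIntegral.integral_congr hEq, intervalIntegral.integral_mul_const]
    rw [intervalIntegral.integral_comp_sub_left (φ (r n)) θ]
    rw [show θ - (g + w n) = p n - w n from by rw [hθ]; ring,
        show θ - (g - w n) = p n + w n from by rw [hθ]; ring]
    ring
  calc C ≤ (n:ℝ)+1 := hCn
  _ ≤ a n * ∫ s in (p n - w n)..(p n + w n), φ (r n) s := hmain n
  _ = ∫ t in (g - w n)..(g + w n), φ (r n) (θ - t) * fn n t := hcore.symm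
  _ ≤ ∫ t in (g-π)..(g+π), φ (r n) (θ - t) * fn n t := hsplit
  _ ≤ ∫ t in (g-π)..(g+π), φ (r n) (θ - t) * f t := hmono
  _ = ∫ t in (-π)..π, φ (r n) (θ - t) * f t := hshift.symm
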